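/- Let f : ℝ → ℂ satisfy |log f(t) + t²/2| ≤ ε|t|³ for all t ∈ ℝ (for some branch choice with log f(0) = 0 and ε > 0). Then for all t with |t| ≤ 1/(4ε), one has |f(t) - e^{-t²/2}| ≤ ε|t|³ e^{-t²/4}. -/

import Mathlib

lemma abs_exp_sub_one_le' (z : ℂ) :
    ‖Complex.exp z - 1‖ ≤ ‖z‖ * Real.exp ‖z‖ := by
  have h := (convex_closedBall (0 : ℂ) ‖z‖).norm_image_sub_le_of_norm_deriv_le
    (f := Complex.exp) (C := Real.exp ‖z‖)
    (fun x _ => Complex.differentiable_exp x)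
    (fun x hx => by
      rw [Complex.deriv_exp, Complex.norm_exp]
      exact Real.exp_le_exp.2 ((Complex.re_le_norm x).trans
        (by simpa [Complex.dist_eq] using hx)))
    (Metric.mem_closedBall_self (norm_nonneg z))
    (show z ∈ Metric.closedBall (0:ℂ) ‖z‖ by
      simp [Metric.mem_closedBall, Complex.dist_eq])
  simpa [Complex.exp_zero, mul_comm] using h

/-- If `L` is a logarithm of `f` with `L 0 = 0` and `|L t + t²/2| ≤ ε|t|³` for all `t`,
then for `|t| ≤ 1/(4ε)` we have `|f t - e^{-t²/2}| ≤ ε|t|³ e^{-t²/4}`. -/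
theorem char_fun_comparison (f : ℝ → ℂ) (L : ℝ → ℂ) (ε : ℝ) (hε : 0 < ε)
    (hfL : ∀ t, f t = Complex.exp (L t)) (hL0 : L 0 = 0)
    (hbound : ∀ t : ℝ, ‖L t + (t:ℂ) ^ 2 / 2‖ ≤ ε * |t| ^ 3) :
    ∀ t : ℝ, |t| ≤ 1 / (4 * ε) →
      ‖f t - Real.exp (-t ^ 2 / 2)‖
        ≤ ε * |t| ^ 3 * Real.exp (-t ^ 2 / 4) := by
  intro t ht
  set z : ℂ := L t + (t:ℂ) ^ 2 / 2 with hz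
  have hz3 : ‖z‖ ≤ ε * |t| ^ 3 := hbound t
  have key : f t - (Real.exp (-t ^ 2 / 2) : ℂ)
      = (Real.exp (-t ^ 2 / 2) : ℂ) * (Complex.exp z - 1) := by
    rw [hfL t]
    have : (Real.exp (-t ^ 2 / 2) : ℂ) = Complex.exp (-(t:ℂ) ^ 2 / 2) := by
      rw [Complex.ofReal_exp]
      congr 1
      push_cast
      ring
    rw [this, mul_sub, ← Complex.exp_add, mul_one]
    rw [hz]
    ring_nf
  rw [key, norm_mul]
  have h1 : ‖(Real.exp (-t ^ 2 / 2) : ℂ)‖ = Real.exp (-t ^ 2 / 2) := by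
    simp [Complex.norm_real, abs_of_pos (Real.exp_pos _), Complex.norm_exp]
    norm_num [← Complex.ofReal_pow]
  rw [h1]
  have h2 : ‖Complex.exp z - 1‖ ≤ ε * |t| ^ 3 * Real.exp (ε * |t| ^ 3) := by
    refine (abs_exp_sub_one_le' z).trans ?_
    exact mul_le_mul hz3 (Real.exp_le_exp.2 hz3) (Real.exp_pos _).le
      (by positivity)
  -- ε|t|³ ≤ t²/4
  have hcube : ε * |t| ^ 3 ≤ t ^ 2 / 4 := by
    have h4 : 4 * ε > 0 := by linarith
    have := (le_div_iff₀ h4).mp ht   -- |t| * (4ε) ≤ 1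
    calc ε * |t| ^ 3 = (|t| * (4 * ε)) * (|t| ^ 2 / 4) := by ring
      _ ≤ 1 * (|t| ^ 2 / 4) := by
          apply mul_le_mul_of_nonneg_right this (by positivity)
      _ = t ^ 2 / 4 := by rw [one_mul, sq_abs]
  calc Real.exp (-t ^ 2 / 2) * ‖Complex.exp z - 1‖
      ≤ Real.exp (-t ^ 2 / 2) * (ε * |t| ^ 3 * Real.exp (ε * |t| ^ 3)) :=
        mul_le_mul_of_nonneg_left h2 (Real.exp_pos _).le
    _ = ε * |t| ^ 3 * Real.exp (-t ^ 2 / 2 + ε * |t| ^ 3) := by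
        rw [Real.exp_add]; ring
    _ ≤ ε * |t| ^ 3 * Real.exp (-t ^ 2 / 4) := by
        apply mul_le_mul_of_nonneg_left _ (by positivity)
        exact Real.exp_le_exp.2 (by linarith)
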